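/- For every integer n ≥ 2, the even-index weighted sum Σ_{k=1}^{⌊n/2⌋} (2k-1)!·S(n,2k) equals the odd-index weighted sum Σ_{k=0}^{⌊n/2⌋} (2k)!·S(n,2k+1). -/

import Mathlib

open Finset

/-- Stirling numbers of the second kind. -/
def S : ℕ → ℕ → ℕ
  | 0, 0 => 1
  | 0, _ + 1 => 0
  | _ + 1, 0 => 0
  | n + 1, k + 1 => (k + 1) * S n (k + 1) + S n k

/-- Ordered Bell (Fubini) numbers. -/
def B (n : ℕ) : ℕ := ∑ k ∈ range (n + 1), k.factorial * S n k

lemma S_succ_succ (n k : ℕ) : S (n+1) (k+1) = (k+1) * S n (k+1) + S n k := rfl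

lemma S_eq_zero : ∀ n k, n < k → S n k = 0
  | 0, _+1, _ => rfl
  | n+1, k+1, h => by
    rw [S_succ_succ, S_eq_zero n (k+1) (by omega), S_eq_zero n k (by omega)]
    ring

lemma evenPairSum (g : ℕ → ℕ) : ∀ K,
    ∑ k ∈ Icc 1 K, (g (2*k) + g (2*k-1)) = ∑ j ∈ Icc 1 (2*K), g j
  | 0 => by simp
  | K+1 => by
    rw [show 2*(K+1) = (2*K+1)+1 by ring,
      Finset.sum_Icc_succ_top (by omega : 1 ≤ 2*K+1+1),
      Finset.sum_Icc_succ_top (by omega : 1 ≤ 2*K+1),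
      ← evenPairSum g K,
      Finset.sum_Icc_succ_top (by omega : 1 ≤ K+1)]
    rw [show 2*(K+1)-1 = 2*K+1 by omega, show 2*(K+1) = 2*K+1+1 by ring]
    ring

lemma oddPairSum (g : ℕ → ℕ) : ∀ K,
    ∑ k ∈ range (K+1), (g (2*k+1) + g (2*k)) = ∑ j ∈ range (2*K+2), g j
  | 0 => by simp [Finset.sum_range_succ, add_comm]
  | K+1 => by
    rw [Finset.sum_range_succ, oddPairSum g K]
    conv_rhs => rw [show 2*(K+1)+2 = (2*K+2)+1+1 by ring,
      Finset.sum_range_succ, Finset.sum_range_succ]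
    have h1 : 2*(K+1)+1 = 2*K+2+1 := by ring
    have h2 : 2*(K+1) = 2*K+2 := by ring
    rw [h1, h2]
    ring

theorem stmt11 (n : ℕ) (hn : 2 ≤ n) :
    ∑ k ∈ Icc 1 (n / 2), (2 * k - 1).factorial * S n (2 * k) =
      ∑ k ∈ range (n / 2 + 1), (2 * k).factorial * S n (2 * k + 1) := by
  obtain ⟨m, rfl⟩ : ∃ m, n = m + 1 := ⟨n - 1, by omega⟩
  set g : ℕ → ℕ := fun j => j.factorial * S m j with hg
  have hL : ∑ k ∈ Icc 1 ((m+1) / 2), (2 * k - 1).factorial * S (m+1) (2 * k)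
      = ∑ k ∈ Icc 1 ((m+1)/2), (g (2*k) + g (2*k-1)) := by
    apply Finset.sum_congr rfl
    intro k hk
    have hk1 : 1 ≤ k := (Finset.mem_Icc.mp hk).1
    have h2k : 2*k = (2*k-1)+1 := by omega
    rw [h2k, S_succ_succ]
    simp only [hg, Nat.factorial_succ, Nat.add_sub_cancel]
    ring
  have hR : ∑ k ∈ range ((m+1)/2 + 1), (2 * k).factorial * S (m+1) (2 * k + 1)
      = ∑ k ∈ range ((m+1)/2 + 1), (g (2*k+1) + g (2*k)) := by
    apply Finset.sum_congr rfl
    intro k _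
    rw [S_succ_succ]
    simp only [hg, Nat.factorial_succ]
    ring
  rw [hL, hR, evenPairSum, oddPairSum]
  have hg0 : g 0 = 0 := by
    obtain ⟨m', rfl⟩ : ∃ m', m = m' + 1 := ⟨m - 1, by omega⟩
    simp only [hg]
    rfl
  have hgtop : g (2*((m+1)/2)+1) = 0 := by
    simp only [hg]
    rw [S_eq_zero m _ (by omega)]
    simp
  rw [show 2*((m+1)/2)+2 = (2*((m+1)/2)+1)+1 by ring, Finset.sum_range_succ, hgtop,
    add_zero, Finset.sum_range_succ', hg0, add_zero, ← Finset.Ico_add_one_right_eq_Icc,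
    Finset.sum_Ico_eq_sum_range]
  simp [add_comm]
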